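/- arXiv:2404.08637 — 3 statements merged into one kernel-verified Lean document; each statement's English description precedes it below -/
import Mathlib

section
/- Let μ : Fin M → ℚ be a positive step-down vector (decreasing, with μ i / μ j a positive integer whenever i ≤ j) with ∑ m, μ m = 1 and such that 1/(μ m) is an integer for every m. Set K = 1/(μ (M−1)), k_m = 1/(μ m), and η_m = μ m · K. Then there exist offsets τ : Fin M → ℕ with τ m < k_m, such that the arithmetic progressions {τ m + c · k_m : 0 ≤ c < η_m} (viewed modulo K) are pairwise disjoint and together partition ZMod K. -/
lemma card_filter_mod_aux (n d r : ℕ) (hd : 0 < d) (hr : r < d) :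
    ((Finset.range (n * d)).filter (fun t => t % d = r)).card = n := by
  have himg : (Finset.range (n * d)).filter (fun t => t % d = r)
      = (Finset.range n).image (fun c => r + c * d) := by
    ext t
    simp only [Finset.mem_filter, Finset.mem_range, Finset.mem_image]
    constructor
    · rintro ⟨hlt, hmod⟩
      refine ⟨t / d, (Nat.div_lt_iff_lt_mul hd).2 hlt, ?_⟩
      have := Nat.mod_add_div' t d
      omega
    · rintro ⟨c, hc, rfl⟩
      constructor
      · have h1 : r + c * d < (c + 1) * d := by ring_nf; omega
        have h2 : (c + 1) * d ≤ n * d := Nat.mul_le_mul_right d hc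
        omega
      · rw [Nat.add_mul_mod_self_right]; exact Nat.mod_eq_of_lt hr
  rw [himg, Finset.card_image_of_injective _ ?_, Finset.card_range]
  intro a b hab
  simp only at hab
  exact Nat.eq_of_mul_eq_mul_right hd (by omega)

/-- Regular-schedule existence: for step-down rates summing to 1 with integer
reciprocals `k m = 1/μ m`, schedule length `K = k (M-1)` and counts
`η m = μ m * K`, there exist offsets `τ m < k m` such that the arithmetic
progressions `{τ m + c * k m : c < η m}` modulo `K` are pairwise disjoint and
cover all of `ZMod K`. -/
theorem stmt3 (M : ℕ) (hM : 0 < M) (μ : Fin M → ℚ)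
    (hpos : ∀ m, 0 < μ m)
    (hdec : ∀ i j : Fin M, i ≤ j → μ j ≤ μ i)
    (hstep : ∀ i j : Fin M, i ≤ j → ∃ z : ℕ, 0 < z ∧ μ i = (z : ℚ) * μ j)
    (hsum : ∑ m, μ m = 1)
    (k : Fin M → ℕ) (hk : ∀ m, (k m : ℚ) = 1 / μ m)
    (η : Fin M → ℕ) (hη : ∀ m, (η m : ℚ) = μ m * (k ⟨M - 1, by omega⟩ : ℚ)) :
    ∃ τ : Fin M → ℕ, (∀ m, τ m < k m) ∧
      (∀ m m' : Fin M, m ≠ m' →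
        Disjoint {x : ZMod (k ⟨M - 1, by omega⟩) | ∃ c < η m, x = ((τ m + c * k m : ℕ) : ZMod (k ⟨M - 1, by omega⟩))}
                 {x : ZMod (k ⟨M - 1, by omega⟩) | ∃ c < η m', x = ((τ m' + c * k m' : ℕ) : ZMod (k ⟨M - 1, by omega⟩))}) ∧
      (⋃ m : Fin M, {x : ZMod (k ⟨M - 1, by omega⟩) | ∃ c < η m, x = ((τ m + c * k m : ℕ) : ZMod (k ⟨M - 1, by omega⟩))})
        = Set.univ := by
  classical
  have hμne : ∀ m, μ m ≠ 0 := fun m => (hpos m).ne'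
  have hkμ : ∀ m, (k m : ℚ) * μ m = 1 := by
    intro m; rw [hk, one_div, inv_mul_cancel₀ (hμne m)]
  have hkpos : ∀ m, 0 < k m := by
    intro m
    rcases Nat.eq_zero_or_pos (k m) with h | h
    · exfalso; have := hkμ m; rw [h] at this; norm_num at this
    · exact h
  have hdvd : ∀ i j : Fin M, i ≤ j → k i ∣ k j := by
    intro i j hij
    obtain ⟨z, hz0, hz⟩ := hstep i j hij
    refine ⟨z, ?_⟩
    have h1 : ((k i : ℚ) * z) * μ j = (k j : ℚ) * μ j := by
      calc ((k i : ℚ) * z) * μ j = (k i : ℚ) * ((z : ℚ) * μ j) := by ring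
        _ = (k i : ℚ) * μ i := by rw [← hz]
        _ = 1 := hkμ i
        _ = (k j : ℚ) * μ j := (hkμ j).symm
    have hq : (k j : ℚ) = (k i : ℚ) * z := (mul_right_cancel₀ (hμne j) h1).symm
    exact_mod_cast hq
  set L : Fin M := ⟨M - 1, by omega⟩ with hL
  have hmleL : ∀ m : Fin M, m ≤ L := by
    intro m
    have := m.isLt
    simp only [Fin.le_def, hL]
    omega
  set K : ℕ := k L with hKdef
  have hkK : ∀ m, k m ∣ K := fun m => hdvd m L (hmleL m)
  have hKpos : 0 < K := hkpos L
  have hηq : ∀ m, (η m : ℚ) = μ m * (K : ℚ) := fun m => hη m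
  have hηk : ∀ m, η m * k m = K := by
    intro m
    have hq : ((η m * k m : ℕ) : ℚ) = (K : ℚ) := by
      push_cast
      rw [hηq m]
      linear_combination ((K : ℕ) : ℚ) * hkμ m
    exact_mod_cast hq
  have hsumη : ∑ m, η m = K := by
    have hq : ((∑ m, η m : ℕ) : ℚ) = (K : ℚ) := by
      push_cast
      calc ∑ m, ((η m : ℕ) : ℚ) = ∑ m, μ m * (K : ℚ) :=
            Finset.sum_congr rfl (fun m _ => hηq m)
        _ = (∑ m, μ m) * K := (Finset.sum_mul _ _ _).symm
        _ = K := by rw [hsum, one_mul]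
    exact_mod_cast hq
  -- greedy step: a free slot always exists
  have free : ∀ (m : Fin M) (τ : Fin M → ℕ), (∀ i, i < m → τ i < k i) →
      ∃ t, t < k m ∧ ∀ i, i < m → t % k i ≠ τ i := by
    intro m τ hτ
    set B := (Finset.range (k m)).filter (fun t => ∃ i, i < m ∧ t % k i = τ i) with hB
    have hBsub : B ⊆ (Finset.univ.filter (· < m)).biUnion
        (fun i => (Finset.range (k m)).filter (fun t => t % k i = τ i)) := by
      intro t ht
      simp only [hB, Finset.mem_filter, Finset.mem_range] at ht
      obtain ⟨hlt, i, hi, hmod⟩ := ht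
      simp only [Finset.mem_biUnion, Finset.mem_filter, Finset.mem_range, Finset.mem_univ,
        true_and]
      exact ⟨i, hi, hlt, hmod⟩
    have hcard_i : ∀ i : Fin M, i < m →
        ((Finset.range (k m)).filter (fun t => t % k i = τ i)).card = k m / k i := by
      intro i hi
      obtain ⟨n, hn⟩ := hdvd i m hi.le
      rw [hn, Nat.mul_div_cancel_left _ (hkpos i), mul_comm (k i) n]
      exact card_filter_mod_aux n (k i) (τ i) (hkpos i) (hτ i hi)
    have hcardB : B.card ≤ ∑ i ∈ Finset.univ.filter (· < m), (k m / k i) := by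
      refine le_trans (Finset.card_le_card hBsub) (le_trans (Finset.card_biUnion_le) ?_)
      refine le_of_eq (Finset.sum_congr rfl ?_)
      intro i hi
      exact hcard_i i (Finset.mem_filter.mp hi).2
    have hlt : ∑ i ∈ Finset.univ.filter (· < m), (k m / k i) < k m := by
      have key : ((∑ i ∈ Finset.univ.filter (· < m), (k m / k i) : ℕ) : ℚ)
          ≤ (k m : ℚ) - 1 := by
        push_cast
        have h1 : ∀ i ∈ Finset.univ.filter (· < m),
            ((k m / k i : ℕ) : ℚ) = (k m : ℚ) * μ i := by
          intro i hi
          have hi' : i < m := (Finset.mem_filter.mp hi).2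
          obtain ⟨n, hn⟩ := hdvd i m hi'.le
          rw [hn, Nat.mul_div_cancel_left _ (hkpos i)]
          push_cast
          linear_combination (-(n : ℚ)) * hkμ i
        rw [Finset.sum_congr rfl h1, ← Finset.mul_sum]
        have h2 : ∑ i ∈ Finset.univ.filter (· < m), μ i ≤ 1 - μ m := by
          have hsub : insert m (Finset.univ.filter (· < m)) ⊆ Finset.univ :=
            Finset.subset_univ _
          have hnm : m ∉ Finset.univ.filter (· < m) := by
            simp [lt_irrefl]
          have hle : ∑ i ∈ insert m (Finset.univ.filter (· < m)), μ i ≤ ∑ i, μ i :=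
            Finset.sum_le_sum_of_subset_of_nonneg hsub (fun i _ _ => (hpos i).le)
          rw [Finset.sum_insert hnm, hsum] at hle
          linarith
        have h3 : (k m : ℚ) * (1 - μ m) = (k m : ℚ) - 1 := by
          linear_combination (-1 : ℚ) * hkμ m
        calc (k m : ℚ) * ∑ i ∈ Finset.univ.filter (· < m), μ i
            ≤ (k m : ℚ) * (1 - μ m) :=
              mul_le_mul_of_nonneg_left h2 (by positivity)
          _ = (k m : ℚ) - 1 := h3
      have h1 : (1 : ℚ) ≤ (k m : ℚ) := by exact_mod_cast hkpos m
      have : ((∑ i ∈ Finset.univ.filter (· < m), (k m / k i) : ℕ) : ℚ) < (k m : ℚ) := by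
        linarith
      exact_mod_cast this
    by_contra hcon
    push_neg at hcon
    have hsub2 : Finset.range (k m) ⊆ B := by
      intro t ht
      simp only [hB, Finset.mem_filter, Finset.mem_range] at *
      refine ⟨ht, ?_⟩
      obtain ⟨i, hi, heq⟩ := hcon t ht
      exact ⟨i, hi, heq⟩
    have := Finset.card_le_card hsub2
    rw [Finset.card_range] at this
    omega
  -- construct τ by induction
  have exτ : ∀ n, n ≤ M → ∃ τ : Fin M → ℕ,
      ∀ m : Fin M, m.val < n → τ m < k m ∧ ∀ i, i < m → τ m % k i ≠ τ i := by
    intro n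
    induction n with
    | zero => intro _; exact ⟨fun _ => 0, fun m hm => absurd hm (by omega)⟩
    | succ n ih =>
      intro hn
      obtain ⟨τ, hτ⟩ := ih (by omega)
      set m0 : Fin M := ⟨n, by omega⟩ with hm0
      obtain ⟨t, htlt, htfree⟩ := free m0 τ (fun i hi => (hτ i hi).1)
      refine ⟨Function.update τ m0 t, ?_⟩
      intro m hm
      by_cases hmm : m = m0
      · subst hmm
        constructor
        · rw [Function.update_self]; exact htlt
        · intro i hi
          rw [Function.update_self, Function.update_of_ne (Fin.ne_of_lt hi)]
          exact htfree i hi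
      · have hmn : m.val < n := by
          have : m.val ≠ n := fun h => hmm (Fin.ext h)
          omega
        rw [Function.update_of_ne hmm]
        refine ⟨(hτ m hmn).1, ?_⟩
        intro i hi
        have hin : i.val < n := lt_trans hi hmn
        have hvm0 : m0.val = n := rfl
        have hine : i ≠ m0 := by
          intro h
          rw [h] at hin
          omega
        rw [Function.update_of_ne hine]
        exact (hτ m hmn).2 i hi
  obtain ⟨τ, hτ0⟩ := exτ M le_rfl
  have hτ : ∀ m : Fin M, τ m < k m ∧ ∀ i, i < m → τ m % k i ≠ τ i :=
    fun m => hτ0 m m.isLt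
  -- key injectivity/disjointness fact
  have key : ∀ i j : Fin M, i < j → ∀ c c' : ℕ,
      ((τ i + c * k i : ℕ) : ZMod K) ≠ ((τ j + c' * k j : ℕ) : ZMod K) := by
    intro i j hij c c' heq
    have hmod : (τ i + c * k i) ≡ (τ j + c' * k j) [MOD K] :=
      (ZMod.natCast_eq_natCast_iff _ _ _).mp heq
    have h1 : (τ i + c * k i) ≡ (τ j + c' * k j) [MOD k i] :=
      hmod.of_dvd (hkK i)
    obtain ⟨d, hd⟩ := hdvd i j hij.le
    have h2 : (τ i + c * k i) % k i = τ i % k i := Nat.add_mul_mod_self_right _ _ _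
    have h3 : (τ j + c' * k j) % k i = τ j % k i := by
      rw [hd, show τ j + c' * (k i * d) = τ j + (c' * d) * k i by ring]
      exact Nat.add_mul_mod_self_right _ _ _
    have h4 : τ j % k i = τ i := by
      have := h1
      unfold Nat.ModEq at this
      rw [h2, h3] at this
      rw [← this]
      exact Nat.mod_eq_of_lt (hτ i).1
    exact (hτ j).2 i hij h4
  refine ⟨τ, fun m => (hτ m).1, ?_, ?_⟩
  · -- disjointness
    intro m m' hne
    rcases hne.lt_or_gt with h | h
    · rw [Set.disjoint_left]
      rintro x ⟨c, hc, rfl⟩ ⟨c', hc', heq⟩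
      exact key m m' h c c' heq
    · rw [Set.disjoint_right]
      rintro x ⟨c, hc, rfl⟩ ⟨c', hc', heq⟩
      exact key m' m h c c' heq
  · -- coverage
    haveI : NeZero K := ⟨hKpos.ne'⟩
    set F : Fin M → Finset (ZMod K) :=
      fun m => (Finset.range (η m)).image (fun c => ((τ m + c * k m : ℕ) : ZMod K)) with hF
    have hFcard : ∀ m, (F m).card = η m := by
      intro m
      rw [hF]
      rw [Finset.card_image_of_injOn, Finset.card_range]
      intro c hc c' hc' heq
      simp only [Finset.coe_range, Set.mem_Iio] at hc hc'
      have hmod : (τ m + c * k m) ≡ (τ m + c' * k m) [MOD K] :=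
        (ZMod.natCast_eq_natCast_iff _ _ _).mp heq
      have h1 : c * k m ≡ c' * k m [MOD K] := Nat.ModEq.add_left_cancel' _ hmod
      have hlt1 : c * k m < K := by
        rw [← hηk m]; exact mul_lt_mul_of_pos_right hc (hkpos m)
      have hlt2 : c' * k m < K := by
        rw [← hηk m]; exact mul_lt_mul_of_pos_right hc' (hkpos m)
      have h2 : c * k m = c' * k m := by
        have := h1
        unfold Nat.ModEq at this
        rw [Nat.mod_eq_of_lt hlt1, Nat.mod_eq_of_lt hlt2] at this
        exact this
      exact Nat.eq_of_mul_eq_mul_right (hkpos m) h2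
    have hFdisj : ∀ i ∈ (Finset.univ : Finset (Fin M)), ∀ j ∈ Finset.univ, i ≠ j →
        Disjoint (F i) (F j) := by
      intro i _ j _ hij
      rw [Finset.disjoint_left]
      intro x hxi hxj
      simp only [hF, Finset.mem_image, Finset.mem_range] at hxi hxj
      obtain ⟨c, hc, hc2⟩ := hxi
      obtain ⟨c', hc', hc2'⟩ := hxj
      rcases hij.lt_or_gt with h | h
      · exact key i j h c c' (hc2.trans hc2'.symm)
      · exact key j i h c' c (hc2'.trans hc2.symm)
    have hcardU : (Finset.univ.biUnion F).card = K := by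
      rw [Finset.card_biUnion hFdisj]
      rw [Finset.sum_congr rfl (fun m _ => hFcard m)]
      exact hsumη
    have hU : Finset.univ.biUnion F = (Finset.univ : Finset (ZMod K)) := by
      apply Finset.eq_univ_of_card
      rw [hcardU, ZMod.card]
    have hA : ∀ m : Fin M,
        {x : ZMod K | ∃ c < η m, x = ((τ m + c * k m : ℕ) : ZMod K)} = (F m : Set (ZMod K)) := by
      intro m
      ext x
      simp only [Set.mem_setOf_eq, hF, Finset.coe_image, Finset.coe_range, Set.mem_image,
        Set.mem_Iio]
      constructor
      · rintro ⟨c, hc, rfl⟩; exact ⟨c, hc, rfl⟩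
      · rintro ⟨c, hc, rfl⟩; exact ⟨c, hc, rfl⟩
    calc (⋃ m : Fin M, {x : ZMod K | ∃ c < η m, x = ((τ m + c * k m : ℕ) : ZMod K)})
        = ⋃ m : Fin M, (F m : Set (ZMod K)) := by
          exact Set.iUnion_congr hA
      _ = (↑(Finset.univ.biUnion F) : Set (ZMod K)) := by
          rw [Finset.coe_biUnion]; simp
      _ = Set.univ := by rw [hU]; simp
end

section
/- Let μ : Fin n → ℝ be nonnegative with μ e + μ (e+1) ≤ 1 for all adjacent pairs, and let w : Fin n → ℝ be positive slice widths. Then min_e (μ e · w e) ≤ min_{e < n−1} (w e · w (e+1))/(w e + w (e+1)). Moreover, the rates defined by μ e = min( w (e−1)/(w e + w (e−1)), w (e+1)/(w e + w (e+1)) ) (with the boundary links using only their single neighbor) satisfy all adjacency constraints and achieve min_e (μ e · w e) = min_{e} (w e · w (e+1))/(w e + w (e+1)). -/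
/-- Throughput-optimal rates under primary interference on a route of `n ≥ 2`
links with positive slice widths `w`. (1) Any nonnegative rates `μ` satisfying
the adjacency constraints `μ e + μ (e+1) ≤ 1` support throughput
`min_e (μ e * w e)` at most the bottleneck value
`min_{e} w e * w (e+1) / (w e + w (e+1))`. (2) The rates
`μ* e = min (w (e-1)/(w e + w (e-1))) (w (e+1)/(w e + w (e+1)))` (boundary links
using their single neighbor) satisfy all adjacency constraints and achieve the
bottleneck value exactly. -/
theorem stmt9 (n : ℕ) (hn : 2 ≤ n) (w : ℕ → ℝ) (hw : ∀ e < n, 0 < w e)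
    (μ : ℕ → ℝ) (hμ0 : ∀ e < n, 0 ≤ μ e)
    (hadj : ∀ e, e + 1 < n → μ e + μ (e + 1) ≤ 1)
    (μstar : ℕ → ℝ)
    (hμstar : ∀ e < n, μstar e =
        if e = 0 then w 1 / (w 0 + w 1)
        else if e = n - 1 then w (n - 2) / (w (n - 1) + w (n - 2))
        else min (w (e - 1) / (w e + w (e - 1))) (w (e + 1) / (w e + w (e + 1)))) :
    (((Finset.range n).image (fun e => μ e * w e)).min'
        ((Finset.nonempty_range_iff.mpr (by omega)).image _) ≤
      ((Finset.range (n - 1)).image (fun e => w e * w (e + 1) / (w e + w (e + 1)))).min'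
        ((Finset.nonempty_range_iff.mpr (by omega)).image _)) ∧
    (∀ e, e + 1 < n → μstar e + μstar (e + 1) ≤ 1) ∧
    (((Finset.range n).image (fun e => μstar e * w e)).min'
        ((Finset.nonempty_range_iff.mpr (by omega)).image _) =
      ((Finset.range (n - 1)).image (fun e => w e * w (e + 1) / (w e + w (e + 1)))).min'
        ((Finset.nonempty_range_iff.mpr (by omega)).image _)) := by
  have hw1 : (0:ℝ) < w 1 := hw 1 (by omega)
  have hbmem : ∀ e, e + 1 < n →
      w e * w (e+1) / (w e + w (e+1)) ∈
        (Finset.range (n-1)).image (fun e => w e * w (e + 1) / (w e + w (e + 1))) := by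
    intro e he
    exact Finset.mem_image.mpr ⟨e, Finset.mem_range.mpr (by omega), rfl⟩
  have hstar_left : ∀ e, e + 1 < n → μstar e ≤ w (e+1) / (w e + w (e+1)) := by
    intro e he
    rw [hμstar e (by omega)]
    by_cases h0 : e = 0
    · subst h0; simp
    · rw [if_neg h0, if_neg (by omega)]
      exact min_le_right _ _
  have hstar_right : ∀ e, e + 1 < n → μstar (e+1) ≤ w e / (w (e+1) + w e) := by
    intro e he
    rw [hμstar (e+1) he, if_neg (by omega)]
    by_cases h1 : e + 1 = n - 1
    · rw [if_pos h1]
      have h2 : n - 2 = e := by omega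
      have h3 : n - 1 = e + 1 := by omega
      rw [h2, h3]
    · rw [if_neg h1]
      have h2 : e + 1 - 1 = e := by omega
      rw [h2]
      exact min_le_left _ _
  refine ⟨?_, ?_, ?_⟩
  · apply Finset.le_min'
    intro y hy
    obtain ⟨e, he, rfl⟩ := Finset.mem_image.mp hy
    rw [Finset.mem_range] at he
    have he' : e + 1 < n := by omega
    have hwe := hw e (by omega)
    have hwe1 := hw (e+1) he'
    have hS : 0 < w e + w (e+1) := by linarith
    by_cases hc : μ e ≤ w (e+1) / (w e + w (e+1))
    · have h1 : μ e * w e ≤ w (e+1) / (w e + w (e+1)) * w e :=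
        mul_le_mul_of_nonneg_right hc hwe.le
      have h2 : w (e+1) / (w e + w (e+1)) * w e = w e * w (e+1) / (w e + w (e+1)) := by
        ring
      exact le_trans (Finset.min'_le _ _
        (Finset.mem_image.mpr ⟨e, Finset.mem_range.mpr (by omega), rfl⟩)) (by linarith)
    · push_neg at hc
      have hadj' := hadj e he'
      have hsum : w (e+1) / (w e + w (e+1)) + w e / (w e + w (e+1)) = 1 := by
        rw [← add_div, add_comm (w (e+1)) (w e), div_self hS.ne']
      have hc2 : μ (e+1) ≤ w e / (w e + w (e+1)) := by linarith
      have h1 : μ (e+1) * w (e+1) ≤ w e / (w e + w (e+1)) * w (e+1) :=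
        mul_le_mul_of_nonneg_right hc2 hwe1.le
      have h2 : w e / (w e + w (e+1)) * w (e+1) = w e * w (e+1) / (w e + w (e+1)) := by
        ring
      exact le_trans (Finset.min'_le _ _
        (Finset.mem_image.mpr ⟨e+1, Finset.mem_range.mpr he', rfl⟩)) (by linarith)
  · intro e he
    have hwe := hw e (by omega)
    have hwe1 := hw (e+1) he
    have hS : 0 < w e + w (e+1) := by linarith
    have h1 := hstar_left e he
    have h2 := hstar_right e he
    have hsum : w (e+1) / (w e + w (e+1)) + w e / (w (e+1) + w e) = 1 := by
      rw [add_comm (w (e+1)) (w e), ← add_div, add_comm (w (e+1)) (w e),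
        div_self hS.ne']
    linarith
  · apply le_antisymm
    · obtain ⟨e0, he0, hb0⟩ := Finset.mem_image.mp (Finset.min'_mem
        ((Finset.range (n - 1)).image (fun e => w e * w (e + 1) / (w e + w (e + 1))))
        ((Finset.nonempty_range_iff.mpr (by omega)).image _))
      rw [Finset.mem_range] at he0
      have he0' : e0 + 1 < n := by omega
      have hwe := hw e0 (by omega)
      have h1 : μstar e0 * w e0 ≤ w (e0+1) / (w e0 + w (e0+1)) * w e0 :=
        mul_le_mul_of_nonneg_right (hstar_left e0 he0') hwe.le
      have h2 : w (e0+1) / (w e0 + w (e0+1)) * w e0 = w e0 * w (e0+1) / (w e0 + w (e0+1)) := by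
        ring
      refine le_trans (Finset.min'_le _ _
        (Finset.mem_image.mpr ⟨e0, Finset.mem_range.mpr (by omega), rfl⟩)) ?_
      rw [← hb0]; linarith
    · apply Finset.le_min'
      intro y hy
      obtain ⟨e, he, rfl⟩ := Finset.mem_image.mp hy
      rw [Finset.mem_range] at he
      have hwe := hw e he
      by_cases h0 : e = 0
      · subst h0
        have : μstar 0 * w 0 = w 0 * w (0+1) / (w 0 + w (0+1)) := by
          rw [hμstar 0 (by omega), if_pos rfl]; norm_num; ring
        rw [this]
        exact Finset.min'_le _ _ (hbmem 0 (by omega))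
      · by_cases h1 : e = n - 1
        · have hm : n - 2 + 1 = n - 1 := by omega
          have : μstar e * w e = w (n-2) * w (n-2+1) / (w (n-2) + w (n-2+1)) := by
            rw [hμstar e (by omega), if_neg h0, if_pos h1, hm, h1]; ring
          rw [this]
          exact Finset.min'_le _ _ (hbmem (n-2) (by omega))
        · have he1 : e + 1 < n := by omega
          have hm : e - 1 + 1 = e := by omega
          have hmin : μstar e * w e =
              min (w (e-1) / (w e + w (e-1)) * w e) (w (e+1) / (w e + w (e+1)) * w e) := by
            rw [hμstar e (by omega), if_neg h0, if_neg h1, min_mul_of_nonneg _ _ hwe.le]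
          rw [hmin]
          apply le_min
          · have h2 : w (e-1) / (w e + w (e-1)) * w e
                = w (e-1) * w (e-1+1) / (w (e-1) + w (e-1+1)) := by
              rw [hm]; ring
            rw [h2]
            exact Finset.min'_le _ _ (hbmem (e-1) (by omega))
          · have h2 : w (e+1) / (w e + w (e+1)) * w e
                = w e * w (e+1) / (w e + w (e+1)) := by ring
            rw [h2]
            exact Finset.min'_le _ _ (hbmem e he1)
end

section
/- Histogram domination implies area domination: let a : Fin p → ℝ and b : Fin q → ℝ be nonnegative decreasing (antitone) sequences with p ≤ q, and suppose a i ≥ b i for all i < p (identifying Fin p indices with the first p indices of Fin q). Define step functions on [0, E) by horizontally scaling: H_a(x) = a(⌊x·p/E⌋) and H_b(x) = b(⌊x·q/E⌋) for a common E > 0. Then ∑_i b i ≤ (q/p)·∑_i a i. -/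
/-- Histogram domination implies area domination: for nonnegative antitone
`a : Fin p → ℝ` and `b : Fin q → ℝ` with `0 < p ≤ q` and `b` pointwise dominated
by `a` on the first `p` coordinates, we have `p * ∑ b ≤ q * ∑ a`. -/
theorem stmt18 (p q : ℕ) (hp : 0 < p) (hpq : p ≤ q)
    (a : Fin p → ℝ) (b : Fin q → ℝ)
    (ha : Antitone a) (hb : Antitone b)
    (ha0 : ∀ i, 0 ≤ a i) (hb0 : ∀ j, 0 ≤ b j)
    (hab : ∀ i : Fin p, b (Fin.castLE hpq i) ≤ a i) :
    (p : ℝ) * ∑ j, b j ≤ (q : ℝ) * ∑ i, a i := by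
  classical
  set f : ℕ → ℝ := fun n => if h : n < q then b ⟨n, h⟩ else 0 with hf
  have hsumb : ∑ j, b j = ∑ n ∈ Finset.range q, f n := by
    rw [Finset.sum_range]
    apply Finset.sum_congr rfl
    intro j _
    simp [hf, j.isLt]
  have hhead : ∑ n ∈ Finset.range p, f n ≤ ∑ i, a i := by
    rw [Finset.sum_range]
    apply Finset.sum_le_sum
    intro i _
    have hi : (i : ℕ) < q := lt_of_lt_of_le i.isLt hpq
    simpa [hf, hi] using (show b ⟨i, hi⟩ ≤ a i from hab i)
  have hheadnn : 0 ≤ ∑ n ∈ Finset.range p, f n := by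
    apply Finset.sum_nonneg
    intro n _
    by_cases h : n < q <;> simp [hf, h, hb0]
  have htail : ∀ j ∈ Finset.Ico p q, (p : ℝ) * f j ≤ ∑ n ∈ Finset.range p, f n := by
    intro j hj
    obtain ⟨hpj, hjq⟩ := Finset.mem_Ico.mp hj
    have : ∑ n ∈ Finset.range p, f j ≤ ∑ n ∈ Finset.range p, f n := by
      apply Finset.sum_le_sum
      intro i hi
      have hi' : i < q := lt_of_lt_of_le (Finset.mem_range.mp hi) hpq
      have : b ⟨j, hjq⟩ ≤ b ⟨i, hi'⟩ :=
        hb (by exact_mod_cast le_trans (le_of_lt (Finset.mem_range.mp hi)) hpj)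
      simpa [hf, hjq, hi'] using this
    rw [show f j = b ⟨j, hjq⟩ from dif_pos hjq] at this ⊢
    simpa [Finset.sum_const, nsmul_eq_mul] using this
  have hsplit : ∑ n ∈ Finset.range q, f n
      = ∑ n ∈ Finset.range p, f n + ∑ n ∈ Finset.Ico p q, f n := by
    rw [Finset.range_eq_Ico, ← Finset.sum_Ico_consecutive f (Nat.zero_le p) hpq,
      ← Finset.range_eq_Ico]
  have key : (p : ℝ) * ∑ n ∈ Finset.range q, f n ≤ (q : ℝ) * ∑ n ∈ Finset.range p, f n := by
    rw [hsplit, mul_add]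
    have h1 : (p : ℝ) * ∑ n ∈ Finset.Ico p q, f n
        ≤ ((q : ℝ) - p) * ∑ n ∈ Finset.range p, f n := by
      rw [Finset.mul_sum]
      calc ∑ j ∈ Finset.Ico p q, (p : ℝ) * f j
          ≤ ∑ j ∈ Finset.Ico p q, ∑ n ∈ Finset.range p, f n :=
            Finset.sum_le_sum htail
        _ = ((q : ℝ) - p) * ∑ n ∈ Finset.range p, f n := by
            rw [Finset.sum_const, Nat.card_Ico, nsmul_eq_mul, Nat.cast_sub hpq]
    linarith
  calc (p : ℝ) * ∑ j, b j ≤ (q : ℝ) * ∑ n ∈ Finset.range p, f n := by rw [hsumb]; exact key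
    _ ≤ (q : ℝ) * ∑ i, a i := by
        apply mul_le_mul_of_nonneg_left hhead (by positivity)
end
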